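/- Let A ∈ ℤ^{m×n} with entries bounded in absolute value by Δ, b ∈ ℤ^m, c ∈ ℝ^n. Suppose c^T y ≠ 0 for every nonzero integer vector y with ‖y‖_∞ ≤ (m+2)·(m·Δ)^m. If the integer program max{c^T x : Ax = b, x ≥ 0, x ∈ ℤ^n} has an optimal solution, then it has an optimal solution x* such that at least n − m components of x* are bounded by (m+2)·(m·Δ)^m, and the columns of A corresponding to components of x* exceeding (m+2)·(m·Δ)^m are linearly independent. -/

import Mathlib

attribute [local instance] Matrix.seminormedAddCommGroup

open Submodule Module Matrix

lemma aux_pow_ineq {m : ℕ} (hm : 1 ≤ m) : (m+1)^m ≤ (m+2) * m^m := by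
  have hm' : (1:ℝ) ≤ (m:ℝ) := by exact_mod_cast hm
  have hmpos : (0:ℝ) < m := by linarith
  have h1 : (1 + 1/(m:ℝ)) ≤ Real.exp (1/m) := by
    have := Real.add_one_le_exp (1/(m:ℝ)); linarith
  have h2 : (1 + 1/(m:ℝ))^m ≤ Real.exp 1 := by
    calc (1 + 1/(m:ℝ))^m ≤ (Real.exp (1/m))^m := by
          apply pow_le_pow_left₀ (by positivity) h1
      _ = Real.exp ((m:ℝ) * (1/m)) := (Real.exp_nat_mul _ m).symm
      _ = Real.exp 1 := by rw [mul_one_div_cancel (ne_of_gt hmpos)]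
  have h3 : Real.exp 1 ≤ 3 := le_of_lt (lt_trans Real.exp_one_lt_d9 (by norm_num))
  have key : ((m:ℝ)+1)^m ≤ ((m:ℝ)+2) * m^m := by
    have : ((m:ℝ)+1)^m = (m:ℝ)^m * (1 + 1/m)^m := by
      rw [← mul_pow]; congr 1; field_simp
    rw [this]
    have : (m:ℝ)^m * (1 + 1/m)^m ≤ (m:ℝ)^m * 3 := by
      apply mul_le_mul_of_nonneg_left (le_trans h2 h3) (by positivity)
    refine this.trans ?_
    have h4 : (3:ℝ) ≤ (m:ℝ)+2 := by linarith
    nlinarith [pow_nonneg hmpos.le m]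
  have : ((m:ℕ)+1:ℝ)^m ≤ (((m+2) * m^m : ℕ) : ℝ) := by push_cast; linarith
  exact_mod_cast this


lemma small_kernel {m n Δ : ℕ} (A : Matrix (Fin m) (Fin n) ℤ)
    (hΔ : ∀ i j, |A i j| ≤ (Δ:ℤ)) (S : Finset (Fin n)) (hcard : S.card ≤ m+1)
    (hB : 0 < (m+2)*(m*Δ)^m)
    (hdep : ¬ LinearIndependent ℚ (fun j : {j // j ∈ S} => fun i : Fin m => (A i j.1 : ℚ))) :
    ∃ g : Fin n → ℤ, g ≠ 0 ∧ A.mulVec g = 0 ∧ (∀ j, j ∉ S → g j = 0) ∧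
      ∀ j, |g j| ≤ (((m+2)*(m*Δ)^m : ℕ) : ℤ) := by
  classical
  by_cases hzero : ∃ j ∈ S, ∀ i, A i j = 0
  · obtain ⟨j0, hj0S, hj0⟩ := hzero
    refine ⟨Pi.single j0 1, ?_, ?_, ?_, ?_⟩
    · intro h
      have := congrFun h j0
      simp [Pi.single_eq_same] at this
    · funext i
      simp [Matrix.mulVec_single, hj0 i]
    · intro j hj
      exact Pi.single_eq_of_ne (by rintro rfl; exact hj hj0S) 1
    · intro j
      rcases eq_or_ne j j0 with rfl | h
      · simp only [Pi.single_eq_same]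
        rw [abs_one]
        exact_mod_cast hB
      · simp only [Pi.single_eq_of_ne h]
        rw [abs_zero]
        positivity
  · push_neg at hzero
    have hSne : S.Nonempty := by
      by_contra h
      rw [Finset.not_nonempty_iff_eq_empty] at h
      subst h
      apply hdep
      haveI : IsEmpty {j : Fin n // j ∈ (∅ : Finset (Fin n))} :=
        ⟨fun j => Finset.notMem_empty _ j.2⟩
      exact linearIndependent_empty_type
    obtain ⟨j1, hj1⟩ := hSne
    obtain ⟨i1, hi1⟩ := hzero j1 hj1
    have hm : 0 < m := i1.pos
    have hΔ1 : 1 ≤ Δ := by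
      have h1 : 1 ≤ |A i1 j1| := Int.one_le_abs hi1
      have h2 := hΔ i1 j1
      exact_mod_cast h1.trans h2
    set rows : Fin m → ({j // j ∈ S} → ℚ) := fun i j => (A i j.1 : ℚ) with hrows
    obtain ⟨bs, hbsub, hbspan, hbind⟩ := exists_linearIndependent ℚ (Set.range rows)
    have hbfin : bs.Finite := hbind.setFinite
    haveI := hbfin.fintype
    have hbcard : bs.toFinset.card = finrank ℚ (span ℚ bs) :=
      (finrank_span_set_eq_card hbind).symm
    -- rank facts: `rows` is also a matrix
    have hcols_dep : ¬ LinearIndependent ℚ rowsᵀ := fun h => hdep h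
    have hlt : finrank ℚ (span ℚ (Set.range rows)) < S.card := by
      have h1 := Matrix.rank_eq_finrank_span_cols (rowsᵀ)
      rw [show rowsᵀ.col = rows from rfl] at h1
      have h2 : rowsᵀ.rank = Matrix.rank rows := Matrix.rank_transpose rows
      have h3 := Matrix.rank_eq_finrank_span_cols rows
      have h4 : (Set.range rowsᵀ).finrank ℚ < Fintype.card {j // j ∈ S} := by
        rcases lt_or_eq_of_le (finrank_range_le_card (R := ℚ) rowsᵀ) with h | h
        · exact h
        · exact absurd (linearIndependent_iff_card_eq_finrank_span.mpr h.symm) hcols_dep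
      rw [← h1, h2, h3, show Matrix.col rows = rowsᵀ from rfl]
      simpa [Fintype.card_coe, Set.finrank] using h4
    -- choose row indices
    have hmemrange : ∀ v : {v // v ∈ bs.toFinset}, (v : {j // j ∈ S} → ℚ) ∈ Set.range rows :=
      fun v => hbsub (Set.mem_toFinset.mp v.2)
    choose ψ hψ using hmemrange
    have hψinj : Function.Injective ψ := fun v w h =>
      Subtype.ext (by rw [← hψ v, ← hψ w, h])
    set R : Finset (Fin m) := Finset.image ψ Finset.univ with hR
    have hRcard : R.card = bs.toFinset.card := by
      rw [hR, Finset.card_image_of_injective _ hψinj, Finset.card_univ, Fintype.card_coe]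
    have hRlt : R.card < S.card := by
      rw [hRcard, hbcard, hbspan]
      exact hlt
    have hrow_span : ∀ i, rows i ∈ span ℚ (rows '' (R : Set (Fin m))) := by
      intro i
      have h5 : bs ⊆ rows '' (R : Set (Fin m)) := by
        intro v hv
        refine ⟨ψ ⟨v, Set.mem_toFinset.mpr hv⟩, ?_, hψ _⟩
        simp [hR]
      have h6 : rows i ∈ span ℚ (Set.range rows) := subset_span (Set.mem_range_self i)
      rw [← hbspan] at h6
      exact span_mono h5 h6
    have hRpos : 0 < R.card := by
      rcases Nat.eq_zero_or_pos R.card with h | h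
      · exfalso
        have hR0 : R = ∅ := Finset.card_eq_zero.mp h
        have h7 := hrow_span i1
        rw [hR0] at h7
        simp only [Finset.coe_empty, Set.image_empty, span_empty, mem_bot] at h7
        apply hi1
        have h8 : ((A i1 j1 : ℚ)) = 0 := congrFun h7 ⟨j1, hj1⟩
        exact_mod_cast h8
      · exact h
    -- Siegel's lemma application
    set A' : Matrix {i // i ∈ R} {j // j ∈ S} ℤ := fun i j => A i.1 j.1 with hA'
    have hcardR : Fintype.card {i // i ∈ R} = R.card := Fintype.card_coe R
    have hcardS : Fintype.card {j // j ∈ S} = S.card := Fintype.card_coe S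
    obtain ⟨t, ht0, htker, htnorm⟩ := Int.Matrix.exists_ne_zero_int_vec_norm_le A'
      (by rw [hcardR, hcardS]; exact hRlt) (by rw [hcardR]; exact hRpos)
    set B : ℕ := (m+2)*(m*Δ)^m with hBdef
    have hbound : ∀ j : {j // j ∈ S}, |t j| ≤ (B : ℤ) := by
      have hΔR : (1:ℝ) ≤ (Δ:ℝ) := by exact_mod_cast hΔ1
      have hb1 : (1:ℝ) ≤ ((m:ℝ)+1) * Δ := by nlinarith [Nat.cast_nonneg (α := ℝ) m]
      have hA'norm : max 1 ‖A'‖ ≤ (Δ:ℝ) := by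
        apply max_le hΔR
        rw [Matrix.norm_le_iff (by positivity)]
        intro i j
        rw [Int.norm_eq_abs]
        exact_mod_cast hΔ i.1 j.1
      set e : ℝ := (Fintype.card {i // i ∈ R} : ℝ) /
        ((Fintype.card {j // j ∈ S} : ℝ) - (Fintype.card {i // i ∈ R} : ℝ)) with hedef
      have hden : (1:ℝ) ≤ (Fintype.card {j // j ∈ S} : ℝ) - (Fintype.card {i // i ∈ R} : ℝ) := by
        rw [hcardR, hcardS]
        have : R.card + 1 ≤ S.card := hRlt
        have := (Nat.cast_le (α := ℝ)).mpr this
        push_cast at this ⊢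
        linarith
      have he0 : 0 ≤ e := div_nonneg (Nat.cast_nonneg _) (by linarith)
      have hem : e ≤ (m:ℝ) := by
        have hnum : (Fintype.card {i // i ∈ R} : ℝ) ≤ m := by
          rw [hcardR]
          exact_mod_cast (Finset.card_le_univ R).trans (by simp)
        calc e ≤ (Fintype.card {i // i ∈ R} : ℝ) := div_le_self (Nat.cast_nonneg _) hden
          _ ≤ m := hnum
      have h11 : ((Fintype.card {j // j ∈ S} : ℝ) * max 1 ‖A'‖) ^ e ≤ (((m:ℝ)+1)*Δ) ^ e := by
        apply Real.rpow_le_rpow (by positivity) ?_ he0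
        apply mul_le_mul ?_ hA'norm (le_trans zero_le_one (le_max_left _ _)) (by positivity)
        rw [hcardS]
        exact_mod_cast hcard
      have h12 : (((m:ℝ)+1)*Δ) ^ e ≤ (((m:ℝ)+1)*Δ) ^ (m:ℝ) :=
        Real.rpow_le_rpow_of_exponent_le hb1 hem
      have h14 : (((m:ℝ)+1)*Δ) ^ (m:ℝ) ≤ (B:ℝ) := by
        rw [Real.rpow_natCast]
        have h15 : ((m+1)*Δ)^m ≤ B := by
          rw [hBdef]
          calc ((m+1)*Δ)^m = (m+1)^m * Δ^m := mul_pow _ _ _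
            _ ≤ ((m+2) * m^m) * Δ^m := Nat.mul_le_mul_right _ (aux_pow_ineq hm)
            _ = (m+2)*(m*Δ)^m := by rw [mul_pow]; ring
        calc (((m:ℝ)+1)*Δ) ^ m = (((m+1)*Δ : ℕ) : ℝ) ^ m := by push_cast; ring_nf
          _ ≤ (B:ℝ) := by
              rw [← Nat.cast_pow]
              exact_mod_cast h15
      intro j
      have h9 : ‖t j‖ ≤ ‖t‖ := norm_le_pi_norm t j
      have h10 : ‖t j‖ ≤ (B:ℝ) := by
        calc ‖t j‖ ≤ ‖t‖ := h9
          _ ≤ _ := htnorm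
          _ ≤ (((m:ℝ)+1)*Δ) ^ e := h11
          _ ≤ (((m:ℝ)+1)*Δ) ^ (m:ℝ) := h12
          _ ≤ (B:ℝ) := h14
      rw [Int.norm_eq_abs] at h10
      exact_mod_cast h10
    -- build the kernel vector
    refine ⟨fun j => if h : j ∈ S then t ⟨j, h⟩ else 0, ?_, ?_, ?_, ?_⟩
    · obtain ⟨j, hj⟩ := Function.ne_iff.mp ht0
      intro hcon
      apply hj
      have := congrFun hcon j.1
      simpa [j.2] using this
    · funext i
      have e1 : A.mulVec (fun j => if h : j ∈ S then t ⟨j, h⟩ else 0) i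
          = ∑ j ∈ S, A i j * (if h : j ∈ S then t ⟨j, h⟩ else 0) := by
        rw [Matrix.mulVec, dotProduct]
        exact (Finset.sum_subset (Finset.subset_univ S)
          (fun j _ hj => by simp [dif_neg hj])).symm
      have e2 : ∑ j ∈ S, A i j * (if h : j ∈ S then t ⟨j, h⟩ else 0)
          = ∑ j ∈ S.attach, A i j.1 * t j := by
        rw [← Finset.sum_attach S (fun j => A i j * (if h : j ∈ S then t ⟨j, h⟩ else 0))]
        exact Finset.sum_congr rfl (fun j _ => by rw [dif_pos j.2])
      set φ : ({j // j ∈ S} → ℚ) →ₗ[ℚ] ℚ :=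
        ∑ j : {j // j ∈ S}, (t j : ℚ) • (LinearMap.proj j) with hφdef
      have hφ : ∀ v, φ v = ∑ j : {j // j ∈ S}, (t j : ℚ) * v j := by
        intro v
        rw [hφdef]
        simp [LinearMap.proj_apply]
      have hkerR : rows '' (R : Set (Fin m)) ⊆ (LinearMap.ker φ : Set _) := by
        rintro _ ⟨i', hi', rfl⟩
        have hi'' : i' ∈ R := hi'
        have h16 : (A'.mulVec t) ⟨i', hi''⟩ = 0 := by rw [htker]; rfl
        simp only [SetLike.mem_coe, LinearMap.mem_ker]
        rw [hφ]
        have h17 : ((∑ j : {j // j ∈ S}, A i' j.1 * t j : ℤ) : ℚ) = 0 := by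
          rw [show (∑ j : {j // j ∈ S}, A i' j.1 * t j : ℤ) = (A'.mulVec t) ⟨i', hi''⟩ from rfl,
            h16]
          norm_num
        push_cast at h17
        rw [← h17]
        exact Finset.sum_congr rfl (fun j _ => by push_cast; ring)
      have h18 : φ (rows i) = 0 := (span_le.mpr hkerR) (hrow_span i)
      rw [hφ] at h18
      have h20 : ((∑ j ∈ S.attach, A i j.1 * t j : ℤ) : ℚ) = 0 := by
        push_cast
        rw [← h18, ← Finset.univ_eq_attach]
        exact Finset.sum_congr rfl (fun j _ => by push_cast [hrows]; ring)
      rw [e1, e2]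
      exact_mod_cast h20
    · intro j hj
      simp [dif_neg hj]
    · intro j
      by_cases h : j ∈ S
      · simp only [dif_pos h]
        exact hbound _
      · simp only [dif_neg h, abs_zero]
        positivity


/-- Lemma 1: under non-degeneracy of `c`, a feasible and bounded IP in standard form has an
optimal solution with at least `n - m` components bounded by `(m+2)(mΔ)^m`, and the columns
of `A` corresponding to larger components are linearly independent. -/
theorem optimal_solution_few_large_components (m n : ℕ) (Δ : ℕ)
    (A : Matrix (Fin m) (Fin n) ℤ) (b : Fin m → ℤ) (c : Fin n → ℝ)
    (hΔ : ∀ i j, |A i j| ≤ (Δ : ℤ))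
    (hc : ∀ y : Fin n → ℤ, y ≠ 0 → (∀ j, |y j| ≤ ((m + 2) * (m * Δ) ^ m : ℕ)) →
      (∑ j, c j * (y j : ℝ)) ≠ 0)
    (hopt : ∃ x : Fin n → ℤ, (A.mulVec x = b ∧ 0 ≤ x) ∧
      ∀ x' : Fin n → ℤ, A.mulVec x' = b → 0 ≤ x' →
        (∑ j, c j * (x' j : ℝ)) ≤ ∑ j, c j * (x j : ℝ)) :
    ∃ x : Fin n → ℤ,
      (A.mulVec x = b ∧ 0 ≤ x) ∧
      (∀ x' : Fin n → ℤ, A.mulVec x' = b → 0 ≤ x' →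
        (∑ j, c j * (x' j : ℝ)) ≤ ∑ j, c j * (x j : ℝ)) ∧
      n - m ≤ (Finset.univ.filter
        (fun j => x j ≤ ((m + 2) * (m * Δ) ^ m : ℕ))).card ∧
      LinearIndependent ℚ
        (fun j : {j : Fin n // ((m + 2) * (m * Δ) ^ m : ℕ) < x j} =>
          (fun i => (A i j.1 : ℚ))) := by
  classical
  obtain ⟨x, ⟨hxA, hx0⟩, hxopt⟩ := hopt
  by_cases hB : (m + 2) * (m * Δ) ^ m = 0
  -- degenerate case : `Δ = 0` and `m ≥ 1`, so `A = 0`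
  · have hΔ0 : Δ = 0 := by
      by_contra h
      have hΔp : 0 < Δ := Nat.pos_of_ne_zero h
      rcases Nat.eq_zero_or_pos m with hm | hm
      · subst hm; simp at hB
      · have h1 : 0 < (m * Δ) ^ m := pow_pos (Nat.mul_pos hm hΔp) m
        have h2 : 0 < (m + 2) * (m * Δ) ^ m := Nat.mul_pos (by omega) h1
        omega
    have hAzero : A = 0 := by
      ext i j
      have h1 := hΔ i j
      rw [hΔ0] at h1
      have h2 : |A i j| ≤ 0 := by exact_mod_cast h1
      simpa using abs_nonpos_iff.mp h2
    have hb0 : b = 0 := by rw [← hxA, hAzero, Matrix.zero_mulVec]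
    refine ⟨0, ⟨by rw [Matrix.mulVec_zero, hb0], le_refl 0⟩, ?_, ?_, ?_⟩
    · intro x' hx'A hx'0
      have h1 := hxopt x' hx'A hx'0
      have h2 := hxopt (x + x) (by rw [Matrix.mulVec_add, hxA, hb0, add_zero])
        (by intro j; have := hx0 j; simp only [Pi.add_apply, Pi.zero_apply] at *; omega)
      have h3 : ∑ j, c j * (((x + x) j : ℤ) : ℝ)
          = (∑ j, c j * ((x j : ℤ) : ℝ)) + ∑ j, c j * ((x j : ℤ) : ℝ) := by
        rw [← Finset.sum_add_distrib]
        refine Finset.sum_congr rfl fun j _ => ?_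
        simp only [Pi.add_apply]; push_cast; ring
      rw [h3] at h2
      have h6 : ∑ j, c j * (((0 : Fin n → ℤ)) j : ℝ) = 0 := by simp
      rw [h6]
      linarith
    · have h1 : Finset.univ.filter
          (fun j : Fin n => (0 : Fin n → ℤ) j ≤ (((m + 2) * (m * Δ) ^ m : ℕ) : ℤ))
          = Finset.univ := by
        apply Finset.filter_true_of_mem
        intro j _
        simp only [Pi.zero_apply]
        positivity
      rw [h1, Finset.card_univ, Fintype.card_fin]
      omega
    · haveI : IsEmpty {j : Fin n // (((m + 2) * (m * Δ) ^ m : ℕ) : ℤ) < (0 : Fin n → ℤ) j} :=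
        ⟨fun j => absurd j.2 (by simp only [Pi.zero_apply]; omega)⟩
      exact linearIndependent_empty_type
  · have hBpos : 0 < (m + 2) * (m * Δ) ^ m := Nat.pos_of_ne_zero hB
    have hind : LinearIndependent ℚ
        (fun j : {j : Fin n // ((m + 2) * (m * Δ) ^ m : ℕ) < x j} =>
          (fun i => (A i j.1 : ℚ))) := by
      by_contra hdep
      set S0 : Finset (Fin n) :=
        Finset.univ.filter (fun j => (((m + 2) * (m * Δ) ^ m : ℕ) : ℤ) < x j) with hS0
      have hdep0 : ¬ LinearIndependent ℚ
          (fun j : {j // j ∈ S0} => fun i : Fin m => (A i j.1 : ℚ)) := by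
        intro h
        apply hdep
        have h2 := (linearIndependent_equiv
          (Equiv.subtypeEquivRight (q := fun j => j ∈ S0)
            (p := fun j : Fin n => (((m + 2) * (m * Δ) ^ m : ℕ) : ℤ) < x j)
            (fun j => by simp [hS0]))).mpr h
        exact h2
      obtain ⟨T, hTsub, hTcard, hTdep⟩ : ∃ T, T ⊆ S0 ∧ T.card ≤ m + 1 ∧
          ¬ LinearIndependent ℚ (fun j : {j // j ∈ T} => fun i : Fin m => (A i j.1 : ℚ)) := by
        by_cases hcS : S0.card ≤ m + 1
        · exact ⟨S0, Finset.Subset.refl _, hcS, hdep0⟩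
        · obtain ⟨T, hT, hTcard⟩ := Finset.exists_subset_card_eq (le_of_lt (lt_of_not_ge hcS))
          refine ⟨T, hT, hTcard.le, fun h => ?_⟩
          have h1 := h.fintype_card_le_finrank
          rw [Module.finrank_pi, Fintype.card_fin, Fintype.card_coe, hTcard] at h1
          omega
      obtain ⟨g, hg0, hgker, hgsupp, hgb⟩ := small_kernel A hΔ T hTcard hBpos hTdep
      have hcg := hc g hg0 (fun j => hgb j)
      obtain ⟨g', hg'0, hg'ker, hg'supp, hg'b, hg'pos⟩ : ∃ g' : Fin n → ℤ, g' ≠ 0 ∧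
          A.mulVec g' = 0 ∧ (∀ j, j ∉ T → g' j = 0) ∧
          (∀ j, |g' j| ≤ (((m + 2) * (m * Δ) ^ m : ℕ) : ℤ)) ∧
          0 < ∑ j, c j * (g' j : ℝ) := by
        rcases lt_or_gt_of_ne hcg with h | h
        · refine ⟨-g, neg_ne_zero.mpr hg0,
            by rw [Matrix.mulVec_neg, hgker, neg_zero],
            fun j hj => by simp [hgsupp j hj],
            fun j => by rw [Pi.neg_apply, abs_neg]; exact hgb j, ?_⟩
          have h3 : ∑ j, c j * (((-g) j : ℤ) : ℝ) = - ∑ j, c j * ((g j : ℤ) : ℝ) := by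
            rw [← Finset.sum_neg_distrib]
            refine Finset.sum_congr rfl fun j _ => ?_
            simp only [Pi.neg_apply]; push_cast; ring
          rw [h3]; linarith
        · exact ⟨g, hg0, hgker, hgsupp, hgb, h⟩
      have hfeas : A.mulVec (x + g') = b := by
        rw [Matrix.mulVec_add, hg'ker, add_zero, hxA]
      have hnonneg : (0 : Fin n → ℤ) ≤ x + g' := by
        intro j
        simp only [Pi.add_apply, Pi.zero_apply]
        by_cases hj : j ∈ T
        · have hjS0 : j ∈ S0 := hTsub hj
          rw [hS0, Finset.mem_filter] at hjS0
          have h4 := hjS0.2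
          have h6 : -((((m + 2) * (m * Δ) ^ m : ℕ)) : ℤ) ≤ g' j := neg_le_of_abs_le (hg'b j)
          omega
        · rw [hg'supp j hj, add_zero]; exact hx0 j
      have hval := hxopt (x + g') hfeas hnonneg
      have hsum : ∑ j, c j * (((x + g') j : ℤ) : ℝ)
          = (∑ j, c j * ((x j : ℤ) : ℝ)) + ∑ j, c j * ((g' j : ℤ) : ℝ) := by
        rw [← Finset.sum_add_distrib]
        refine Finset.sum_congr rfl fun j _ => ?_
        simp only [Pi.add_apply]; push_cast; ring
      rw [hsum] at hval
      linarith
    refine ⟨x, ⟨hxA, hx0⟩, hxopt, ?_, hind⟩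
    have h1 := hind.fintype_card_le_finrank
    rw [Module.finrank_pi, Fintype.card_fin, Fintype.card_subtype] at h1
    have h2 := Finset.card_filter_add_card_filter_not (s := Finset.univ)
      (p := fun j : Fin n => (((m + 2) * (m * Δ) ^ m : ℕ) : ℤ) < x j)
    have h3 : Finset.univ.filter
        (fun j : Fin n => ¬ ((((m + 2) * (m * Δ) ^ m : ℕ) : ℤ) < x j))
        = Finset.univ.filter (fun j => x j ≤ (((m + 2) * (m * Δ) ^ m : ℕ) : ℤ)) := by
      apply Finset.filter_congr
      intro j _
      simp [not_lt]
    rw [h3, Finset.card_univ, Fintype.card_fin] at h2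
    omega
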